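/- For every ε > 0, every finite connected graph G admits a straight-line drawing in the plane in which no three vertices are collinear and whose spanning ratio is strictly less than 1 + ε. -/

import Mathlib

noncomputable def wlen {V : Type*} {G : SimpleGraph V} (ρ : V → EuclideanSpace ℝ (Fin 2)) :
    ∀ {u v : V}, G.Walk u v → ℝ
  | _, _, SimpleGraph.Walk.nil => 0
  | u, _, SimpleGraph.Walk.cons (v := b) _ p => dist (ρ u) (ρ b) + wlen ρ p

section Helpers

variable {V : Type*} {G : SimpleGraph V} (ρ : V → EuclideanSpace ℝ (Fin 2))

lemma wlen_nil {u : V} : wlen ρ (SimpleGraph.Walk.nil : G.Walk u u) = 0 := rfl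

lemma wlen_cons {u b v : V} (h : G.Adj u b) (p : G.Walk b v) :
    wlen ρ (SimpleGraph.Walk.cons h p) = dist (ρ u) (ρ b) + wlen ρ p := rfl

lemma wlen_append {u v w : V} (p : G.Walk u v) (q : G.Walk v w) :
    wlen ρ (p.append q) = wlen ρ p + wlen ρ q := by
  induction p with
  | nil => simp [wlen_nil]
  | cons h p ih => rw [SimpleGraph.Walk.cons_append, wlen_cons, wlen_cons, ih]; ring

lemma wlen_reverse {u v : V} (p : G.Walk u v) : wlen ρ p.reverse = wlen ρ p := by
  induction p with
  | nil => rfl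
  | cons h p ih =>
      rw [SimpleGraph.Walk.reverse_cons, wlen_append, ih, wlen_cons, wlen_cons, wlen_nil,
        dist_comm]
      ring

open SimpleGraph List in
lemma exists_adj_indexOf_lt [DecidableEq V] :
    ∀ {x y : V} (p : G.Walk x y) (v : V), v ∈ p.support → v ≠ x →
      ∃ u, G.Adj u v ∧ p.support.idxOf u < p.support.idxOf v := by
  intro x y p
  induction p with
  | nil => intro v hv hne; simp at hv; exact absurd hv hne
  | @cons x b y h p ih =>
      intro v hv hne
      rw [SimpleGraph.Walk.support_cons] at hv ⊢
      have hvp : v ∈ p.support := by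
        rcases List.mem_cons.1 hv with h1 | h1
        · exact absurd h1 hne
        · exact h1
      by_cases hvb : v = b
      · subst hvb
        refine ⟨x, h, ?_⟩
        rw [List.idxOf_cons_self, List.idxOf_cons_ne _ (Ne.symm hne)]
        omega
      · obtain ⟨u, hu, hlt⟩ := ih v hvp hvb
        refine ⟨u, hu, ?_⟩
        rw [List.idxOf_cons_ne _ (Ne.symm hne)]
        by_cases hux : u = x
        · subst hux; rw [List.idxOf_cons_self]; omega
        · rw [List.idxOf_cons_ne _ (Ne.symm hux)]; omega

open SimpleGraph in
lemma exists_cover (hG : G.Connected) (a : V) (l : List V) :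
    ∃ w : G.Walk a a, ∀ v ∈ l, v ∈ w.support := by
  induction l with
  | nil => exact ⟨SimpleGraph.Walk.nil, by simp⟩
  | cons x l ih =>
      obtain ⟨w, hw⟩ := ih
      refine ⟨((hG.preconnected a x).some.append (hG.preconnected x a).some).append w, ?_⟩
      intro v hv
      rw [SimpleGraph.Walk.mem_support_append_iff, SimpleGraph.Walk.mem_support_append_iff]
      rcases List.mem_cons.1 hv with h1 | h1
      · subst h1; exact Or.inl (Or.inl (SimpleGraph.Walk.end_mem_support _))
      · exact Or.inr (hw v h1)

end Helpers

noncomputable def pt (a b : ℝ) : EuclideanSpace ℝ (Fin 2) :=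
  (WithLp.equiv 2 (Fin 2 → ℝ)).symm ![a, b]

lemma pt_apply_zero (a b : ℝ) : pt a b 0 = a := rfl
lemma pt_apply_one (a b : ℝ) : pt a b 1 = b := rfl

lemma pt_dist (a b x y : ℝ) :
    dist (pt a b) (pt x y) = Real.sqrt ((a - x) ^ 2 + (b - y) ^ 2) := by
  rw [EuclideanSpace.dist_eq, Fin.sum_univ_two]
  simp [pt_apply_zero, pt_apply_one, Real.dist_eq, sq_abs]

lemma pt_dist_lower (a b x y : ℝ) : |a - x| ≤ dist (pt a b) (pt x y) := by
  rw [pt_dist, ← Real.sqrt_sq_eq_abs]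
  exact Real.sqrt_le_sqrt (by nlinarith [sq_nonneg (b - y)])

lemma pt_dist_upper (a b x y : ℝ) : dist (pt a b) (pt x y) ≤ |a - x| + |b - y| := by
  rw [pt_dist]
  rw [show ((a-x)^2 + (b-y)^2 : ℝ) = |a-x|^2 + |b-y|^2 by simp [sq_abs]]
  refine Real.sqrt_le_sqrt ?_ |>.trans (Real.sqrt_sq (by positivity)).le
  nlinarith [abs_nonneg (a - x), abs_nonneg (b - y)]

lemma pt_not_collinear {d a₁ a₂ a₃ : ℝ} (hd : d ≠ 0)
    (h12 : a₁ ≠ a₂) (h13 : a₁ ≠ a₃) (h23 : a₂ ≠ a₃) :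
    ¬ Collinear ℝ ({pt a₁ (d * a₁ ^ 2), pt a₂ (d * a₂ ^ 2), pt a₃ (d * a₃ ^ 2)} : Set _) := by
  intro hc
  rw [collinear_iff_exists_forall_eq_smul_vadd] at hc
  obtain ⟨p₀, v, hv⟩ := hc
  obtain ⟨r₁, hr₁⟩ := hv (pt a₁ (d * a₁ ^ 2)) (by simp)
  obtain ⟨r₂, hr₂⟩ := hv (pt a₂ (d * a₂ ^ 2)) (by simp)
  obtain ⟨r₃, hr₃⟩ := hv (pt a₃ (d * a₃ ^ 2)) (by simp)
  have comp : ∀ (a r : ℝ), pt a (d * a ^ 2) = r • v +ᵥ p₀ →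
      a = r * v 0 + p₀ 0 ∧ d * a ^ 2 = r * v 1 + p₀ 1 := by
    intro a r h
    constructor
    · conv_lhs => rw [← pt_apply_zero a (d * a ^ 2), h]
      simp [PiLp.add_apply, PiLp.smul_apply, vadd_eq_add, smul_eq_mul]
    · conv_lhs => rw [← pt_apply_one a (d * a ^ 2), h]
      simp [PiLp.add_apply, PiLp.smul_apply, vadd_eq_add, smul_eq_mul]
  obtain ⟨e₁0, e₁1⟩ := comp a₁ r₁ hr₁
  obtain ⟨e₂0, e₂1⟩ := comp a₂ r₂ hr₂
  obtain ⟨e₃0, e₃1⟩ := comp a₃ r₃ hr₃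
  have d20 : a₂ - a₁ = (r₂ - r₁) * v 0 := by rw [e₂0, e₁0]; ring
  have d21 : d * a₂ ^ 2 - d * a₁ ^ 2 = (r₂ - r₁) * v 1 := by rw [e₂1, e₁1]; ring
  have d30 : a₃ - a₁ = (r₃ - r₁) * v 0 := by rw [e₃0, e₁0]; ring
  have d31 : d * a₃ ^ 2 - d * a₁ ^ 2 = (r₃ - r₁) * v 1 := by rw [e₃1, e₁1]; ring
  have key : d * (a₂ - a₁) * (a₃ - a₁) * (a₃ - a₂) = 0 := by
    have h1 : (a₂ - a₁) * (d * a₃ ^ 2 - d * a₁ ^ 2) - (a₃ - a₁) * (d * a₂ ^ 2 - d * a₁ ^ 2)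
        = 0 := by rw [d20, d21, d30, d31]; ring
    linear_combination h1
  exact mul_ne_zero (mul_ne_zero (mul_ne_zero hd (sub_ne_zero.2 h12.symm))
    (sub_ne_zero.2 h13.symm)) (sub_ne_zero.2 h23.symm) key

set_option maxHeartbeats 1600000 in
/-- For every `ε > 0`, every finite connected graph admits a straight-line drawing with no
three vertices collinear and spanning ratio strictly less than `1 + ε`. -/
theorem connected_graph_proper_drawing_spanning_ratio_lt
    {V : Type*} [Fintype V] (G : SimpleGraph V) (hG : G.Connected)
    (ε : ℝ) (hε : 0 < ε) :
    ∃ ρ : V → EuclideanSpace ℝ (Fin 2), Function.Injective ρ ∧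
      (∀ u v w : V, u ≠ v → u ≠ w → v ≠ w → ¬ Collinear ℝ ({ρ u, ρ v, ρ w} : Set _)) ∧
      ∀ u v : V, u ≠ v →
        ∃ p : G.Walk u v, wlen ρ p < (1 + ε) * dist (ρ u) (ρ v) := by
  classical
  have hne : Nonempty V := hG.nonempty
  obtain ⟨a⟩ := hne
  obtain ⟨w, hw⟩ := exists_cover hG a Finset.univ.toList
  obtain ⟨s, hs⟩ : ∃ s : List V, s = w.support := ⟨_, rfl⟩
  have hmem : ∀ v : V, v ∈ s := fun v => by rw [hs]; exact hw v (by simp)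
  obtain ⟨idx, hidxdef⟩ : ∃ f : V → ℕ, f = fun v => s.idxOf v := ⟨_, rfl⟩
  have hidx_lt : ∀ v, idx v < s.length := fun v => by
    rw [hidxdef]; exact List.idxOf_lt_length_iff.2 (hmem v)
  have hidx_inj : ∀ u v : V, idx u = idx v → u = v := fun u v h => by
    rw [hidxdef] at h
    exact (List.idxOf_inj (hmem u)).1 h
  have hidx_a : idx a = 0 := by
    rw [hidxdef]
    show s.idxOf a = 0
    rw [hs, w.support_eq_cons, List.idxOf_cons_self]
  have hidx_zero : ∀ v, idx v = 0 → v = a := fun v h =>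
    hidx_inj v a (by rw [h, hidx_a])
  have parent : ∀ v : V, v ≠ a → ∃ u, G.Adj u v ∧ idx u < idx v := fun v hv => by
    rw [hidxdef]
    have hm := hmem v
    rw [hs] at hm ⊢
    exact exists_adj_indexOf_lt w v hm hv
  -- parameters
  obtain ⟨n, hn⟩ : ∃ n : ℕ, n = s.length := ⟨_, rfl⟩
  rw [← hn] at hidx_lt
  obtain ⟨M, hMdef⟩ : ∃ M : ℝ, M = max 4 (12 / ε + 1) := ⟨_, rfl⟩
  have hM4 : (4 : ℝ) ≤ M := by rw [hMdef]; exact le_max_left _ _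
  have hM1 : (1 : ℝ) < M := by linarith
  have hM0 : (0 : ℝ) < M := by linarith
  have hMε : 12 ≤ ε * M := by
    have h1 : 12 / ε + 1 ≤ M := by rw [hMdef]; exact le_max_right _ _
    have h2 : 12 / ε < M := by linarith
    calc (12 : ℝ) = ε * (12 / ε) := by field_simp
    _ ≤ ε * M := by nlinarith
  obtain ⟨c, hcdef⟩ : ∃ c : V → ℝ, c = fun v => M ^ idx v := ⟨_, rfl⟩
  have hc_pos : ∀ v, 0 < c v := fun v => by rw [hcdef]; exact pow_pos hM0 _
  obtain ⟨B, hBdef⟩ : ∃ B : ℝ, B = M ^ n := ⟨_, rfl⟩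
  have hB_pos : 0 < B := by rw [hBdef]; exact pow_pos hM0 _
  have hB_pos' : 0 < B := hB_pos
  have hc_le_B : ∀ v, c v ≤ B := fun v => by
    rw [hcdef, hBdef]
    exact pow_le_pow_right₀ hM1.le (hidx_lt v).le
  obtain ⟨δ, hδdef⟩ : ∃ d : ℝ, d = ε / (8 * B * (1 + ε)) := ⟨_, rfl⟩
  have hδ_pos : 0 < δ := by rw [hδdef]; positivity
  have hδB : 2 * δ * B = ε / (4 * (1 + ε)) := by
    rw [hδdef]; field_simp; ring
  obtain ⟨ρ, hρdef⟩ : ∃ r : V → EuclideanSpace ℝ (Fin 2), r = fun v => pt (c v) (δ * c v ^ 2) := ⟨_, rfl⟩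
  have hc_lt : ∀ {u v : V}, idx u < idx v → c u < c v := fun h => by
    rw [hcdef]; exact pow_lt_pow_right₀ hM1 h
  have hc_inj : ∀ u v : V, c u = c v → u = v := by
    intro u v h
    refine hidx_inj u v ?_
    by_contra hne
    rcases Nat.lt_or_ge (idx u) (idx v) with h1 | h1
    · exact absurd h (hc_lt h1).ne
    · exact absurd h.symm (hc_lt (lt_of_le_of_ne h1 (Ne.symm hne))).ne
  have hcM : ∀ {u v : V}, idx u < idx v → c u * M ≤ c v := by
    intro u v h
    rw [hcdef]
    calc M ^ idx u * M = M ^ (idx u + 1) := by rw [pow_succ]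
    _ ≤ M ^ idx v := pow_le_pow_right₀ hM1.le h
  -- distance bounds
  have hlow : ∀ u v : V, |c u - c v| ≤ dist (ρ u) (ρ v) := fun u v => by
    rw [hρdef]; exact pt_dist_lower _ _ _ _
  have hup : ∀ u v : V, dist (ρ u) (ρ v) ≤ (1 + 2 * δ * B) * |c u - c v| := by
    intro u v
    rw [hρdef]
    refine (pt_dist_upper _ _ _ _).trans ?_
    have h2 : |δ * c u ^ 2 - δ * c v ^ 2| ≤ 2 * δ * B * |c u - c v| := by
      rw [show δ * c u ^ 2 - δ * c v ^ 2 = (δ * (c u + c v)) * (c u - c v) by ring,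
        abs_mul, abs_of_nonneg (mul_nonneg hδ_pos.le (add_nonneg (hc_pos u).le (hc_pos v).le))]
      have h3 : δ * (c u + c v) ≤ 2 * δ * B := by
        nlinarith [hc_le_B u, hc_le_B v]
      exact mul_le_mul_of_nonneg_right h3 (abs_nonneg _)
    nlinarith [abs_nonneg (c u - c v)]
  -- chain to root
  obtain ⟨K, hKdef⟩ : ∃ K : ℝ, K = (1 + 2 * δ * B) * M / (M - 1) := ⟨_, rfl⟩
  have h1δB : (0:ℝ) < 1 + 2 * δ * B := by nlinarith [mul_pos hδ_pos hB_pos]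
  have hK_pos : 0 < K := by
    rw [hKdef]; exact div_pos (by nlinarith) (by linarith)
  have hKeq : K * (M - 1) = (1 + 2 * δ * B) * M := by
    rw [hKdef, div_mul_cancel₀ _ (by linarith : M - (1:ℝ) ≠ 0)]
  have chain : ∀ N : ℕ, ∀ v : V, idx v ≤ N → ∃ p : G.Walk v a, wlen ρ p ≤ K * c v := by
    intro N
    induction N with
    | zero =>
        intro v hv0
        have hva : v = a := hidx_zero v (Nat.le_zero.mp hv0)
        subst hva
        exact ⟨SimpleGraph.Walk.nil, by
          rw [wlen_nil]; exact (mul_pos hK_pos (hc_pos _)).le⟩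
    | succ N ih =>
        intro v hv
        by_cases hva : v = a
        · subst hva
          exact ⟨SimpleGraph.Walk.nil, by
            rw [wlen_nil]; exact (mul_pos hK_pos (hc_pos _)).le⟩
        · obtain ⟨u, hadj, hlt⟩ := parent v hva
          obtain ⟨q, hq⟩ := ih u (by omega)
          refine ⟨SimpleGraph.Walk.cons hadj.symm q, ?_⟩
          rw [wlen_cons]
          have h1 : dist (ρ v) (ρ u) ≤ (1 + 2 * δ * B) * c v := by
            refine (hup v u).trans ?_
            have habs : |c v - c u| ≤ c v := by
              rw [abs_of_nonneg (by linarith [hc_lt hlt])]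
              linarith [hc_pos u]
            nlinarith
          have h2 : c u ≤ c v / M := by
            rw [le_div_iff₀ hM0]; exact hcM hlt
          have h3 : K * c u ≤ K * (c v / M) :=
            mul_le_mul_of_nonneg_left h2 hK_pos.le
          have h4 : (1 + 2 * δ * B) * c v + K * (c v / M) ≤ K * c v := by
            have hcv := hc_pos v
            have hexp2 : (1 + 2 * δ * B) + K / M = K := by
              apply mul_right_cancel₀ hM0.ne'
              rw [add_mul, div_mul_cancel₀ K hM0.ne']
              linear_combination -hKeq
            have heq : (1 + 2 * δ * B) * c v + K * (c v / M)
                = ((1 + 2 * δ * B) + K / M) * c v := by ring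
            rw [heq, hexp2]
          linarith [hq]
  -- numeric inequality
  have hnum : K * (M + 1) < (1 + ε) * (M - 1) := by
    have h12 : 12 * (M - 1) ^ 2 ≤ ε * M * (M - 1) ^ 2 := by
      nlinarith [hMε, sq_nonneg (M - 1)]
    have hq1M : M * (M * (M + 1)) ≤ M * ((1 + ε / 2) * (M - 1) ^ 2) := by
      nlinarith [h12, hM4]
    have hq1 : M * (M + 1) ≤ (1 + ε / 2) * (M - 1) ^ 2 :=
      le_of_mul_le_mul_left hq1M hM0
    have ht_pos : 0 < 2 * δ * B := by nlinarith [mul_pos hδ_pos hB_pos]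
    have hδB2 : 2 * δ * B * (4 * (1 + ε)) = ε := by
      rw [hδB]; field_simp
    have htε : 0 < 2 * δ * B * ε := mul_pos ht_pos hε
    have hfac : (1 + 2 * δ * B) * (1 + ε / 2) < 1 + ε := by
      nlinarith [hδB2, ht_pos, htε]
    have hstep : K * (M + 1) * (M - 1) < (1 + ε) * (M - 1) * (M - 1) := by
      have e1 : K * (M + 1) * (M - 1) = (1 + 2 * δ * B) * M * (M + 1) := by
        linear_combination (M + 1) * hKeq
      rw [e1]
      calc (1 + 2 * δ * B) * M * (M + 1)
          ≤ (1 + 2 * δ * B) * ((1 + ε / 2) * (M - 1) ^ 2) := by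
            nlinarith [hq1, h1δB]
        _ < (1 + ε) * ((M - 1) ^ 2) := by nlinarith [hfac, sq_nonneg (M - 1), hM4]
        _ = (1 + ε) * (M - 1) * (M - 1) := by ring
    exact lt_of_mul_lt_mul_right hstep (by linarith)
  -- key distance inequality
  have key : ∀ x y : V, idx x < idx y → K * (c x + c y) < (1 + ε) * dist (ρ x) (ρ y) := by
    intro x y hxy
    have hcmx := hcM hxy
    have hcy := hc_pos y
    have hcx := hc_pos x
    have hd_pos : 0 < c y / M := div_pos hcy hM0
    have hd : c y / M * M = c y := div_mul_cancel₀ _ hM0.ne'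
    have hcx_le : c x ≤ c y / M := by rw [le_div_iff₀ hM0]; exact hcmx
    have hmul := mul_lt_mul_of_pos_right hnum hd_pos
    have hdist : c y - c x ≤ dist (ρ x) (ρ y) := by
      have h5 : c y - c x ≤ |c x - c y| := by rw [abs_sub_comm]; exact le_abs_self _
      linarith [hlow x y]
    have e3 : K * (c y / M * M) = K * c y := by rw [hd]
    have e4 : (1 + ε) * (c y / M * M) = (1 + ε) * c y := by rw [hd]
    calc K * (c x + c y) ≤ K * (c y / M + c y) := by nlinarith [hK_pos, hcx_le]
      _ < (1 + ε) * (c y - c y / M) := by nlinarith [hmul, e3, e4]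
      _ ≤ (1 + ε) * (c y - c x) := by nlinarith [hε, hcx_le]
      _ ≤ (1 + ε) * dist (ρ x) (ρ y) := by nlinarith [hdist, hε]
  -- assemble
  refine ⟨ρ, ?_, ?_, ?_⟩
  · intro u v huv
    apply hc_inj
    have h0 : (ρ u) 0 = (ρ v) 0 := by rw [huv]
    simp only [hρdef, pt_apply_zero] at h0
    exact h0
  · intro u v x huv hux hvx
    simp only [hρdef]
    exact pt_not_collinear hδ_pos.ne'
      (fun h => huv (hc_inj _ _ h)) (fun h => hux (hc_inj _ _ h))
      (fun h => hvx (hc_inj _ _ h))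
  · intro u v huv
    obtain ⟨p₁, hp₁⟩ := chain (idx u) u le_rfl
    obtain ⟨p₂, hp₂⟩ := chain (idx v) v le_rfl
    refine ⟨p₁.append p₂.reverse, ?_⟩
    rw [wlen_append, wlen_reverse]
    have hij : idx u ≠ idx v := fun h => huv (hidx_inj u v h)
    rcases Nat.lt_or_ge (idx u) (idx v) with hlt | hge
    · have := key u v hlt
      linarith [hp₁, hp₂]
    · have hlt' : idx v < idx u := lt_of_le_of_ne hge (Ne.symm hij)
      have := key v u hlt'
      rw [dist_comm] at this
      linarith [hp₁, hp₂]
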